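/- For every real ε with 0 < ε ≤ 1/3 and every natural number k ≥ 1, there exists a finite Markov chain with 2k + 2 states that has at least 2^k pairwise distinct minimal ε-cores. Concretely, the chain with states {s₀, t} ∪ {a₁, b₁, …, a_k, b_k}, initial state s₀, transition δ(s₀) = Σᵢ₌₁ᵏ p·(δ_{aᵢ} + δ_{bᵢ}) + (1 − 2kp)·δ_t where p = ε/(k+1), and with t and all aᵢ, bᵢ absorbing, has the property that a set C is a minimal ε-core exactly when C = {s₀, t} ∪ L for some k-element subset L of {a₁, b₁, …, a_k, b_k}; hence there are binom(2k, k) ≥ 2^k minimal ε-cores. -/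

import Mathlib

open MeasureTheory

/-- A Markov chain: an initial state and a transition distribution for each state. -/
structure MC (S : Type*) where
  init : S
  trans : S → PMF S

/-- The space of infinite paths `s₀ s₁ s₂ ⋯` of a Markov chain. -/
def MCTraj (S : Type*) := ℕ → S

instance {S : Type*} : MeasurableSpace (MCTraj S) :=
  @MeasurableSpace.pi ℕ (fun _ => S) (fun _ => ⊤)

variable {S : Type*}

/-- The probability that a path of the chain starting in state `s` begins with exactly the
finite sequence `pre` of states. -/
noncomputable def mcCylProb [DecidableEq S] (M : MC S) : S → List S → ENNReal
  | _, [] => 1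
  | s, t :: rest =>
      (if t = s then 1 else 0) * ∑' s' : S, (M.trans s) s' * mcCylProb M s' rest

/-- The cylinder set of all infinite paths whose first coordinates agree with `pre`. -/
def MCCyl (pre : List S) : Set (MCTraj S) :=
  {ω | ∀ i : Fin pre.length, ω i = pre.get i}

/-- `P` is the family of path measures of `M` induced (via the Ionescu–Tulcea construction)
by the start states: each `P s` is a probability measure on infinite paths starting in `s`
whose value on every cylinder is the product of the transition probabilities. -/
def IsMCPathMeasure [DecidableEq S] (M : MC S) (P : S → Measure (MCTraj S)) : Prop :=
  (∀ s, IsProbabilityMeasure (P s)) ∧ ∀ s pre, P s (MCCyl pre) = mcCylProb M s pre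

/-- The set of paths that visit `R` at some point. -/
def MCReach (R : Set S) : Set (MCTraj S) := {ω | ∃ i, ω i ∈ R}

/-- `C` is an `ε`-core of the chain: the probability of ever leaving `C` is `< ε`. -/
def IsMCCore [DecidableEq S] (M : MC S) (P : S → Measure (MCTraj S)) (ε : ℝ)
    (C : Set S) : Prop :=
  P M.init (MCReach Cᶜ) < ENNReal.ofReal ε

/-- `C` is a minimal `ε`-core: it is an `ε`-core and no proper subset of it is one. -/
def IsMinimalMCCore [DecidableEq S] (M : MC S) (P : S → Measure (MCTraj S)) (ε : ℝ)
    (C : Set S) : Prop :=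
  IsMCCore M P ε C ∧ ∀ C' ⊂ C, ¬ IsMCCore M P ε C'

/-- The states of the chain witnessing exponentially many minimal cores: `none` is the
initial state `s₀`, `some none` is the absorbing state `t`, and `some (some (i, ff/tt))`
are the absorbing states `aᵢ` and `bᵢ`. -/
abbrev ExpState (k : ℕ) := Option (Option (Fin k × Bool))

/-- The successor weights of the initial state: weight `p = ε/(k+1)` on each of the `2k`
states `aᵢ`, `bᵢ` and weight `1 − 2kp` on `t`. -/
noncomputable def expWeight (k : ℕ) (ε : ℝ) : ExpState k → ENNReal
  | none => 0
  | some none => 1 - ((2 * k : ℕ) : ENNReal) * ENNReal.ofReal (ε / (k + 1))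
  | some (some _) => ENNReal.ofReal (ε / (k + 1))

lemma expWeight_sum (k : ℕ) (ε : ℝ) (hε1 : 0 < ε) (hε2 : ε ≤ 1 / 3) :
    ∑ t : ExpState k, expWeight k ε t = 1 := by
  classical
  set p : ENNReal := ENNReal.ofReal (ε / (k + 1)) with hp
  have hk1 : (0 : ℝ) < (k : ℝ) + 1 := by positivity
  have hreal : (2 * (k : ℝ)) * (ε / ((k : ℝ) + 1)) ≤ 1 := by
    rw [mul_div_assoc']
    rw [div_le_one hk1]
    have hk0 : (0 : ℝ) ≤ 2 * (k : ℝ) := by positivity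
    have := mul_le_mul_of_nonneg_left hε2 hk0
    linarith
  have hle : ((2 * k : ℕ) : ENNReal) * p ≤ 1 := by
    have hcast : ((2 * k : ℕ) : ENNReal) = ENNReal.ofReal (2 * (k : ℝ)) := by
      rw [← ENNReal.ofReal_natCast]; push_cast; ring_nf
    rw [hp, hcast, ← ENNReal.ofReal_mul (by positivity)]
    exact ENNReal.ofReal_le_one.mpr hreal
  have hconst : (∑ _x : Fin k × Bool, p) = ((2 * k : ℕ) : ENNReal) * p := by
    rw [Finset.sum_const, Finset.card_univ, Fintype.card_prod, Fintype.card_fin,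
      Fintype.card_bool, nsmul_eq_mul]
    congr 1
    push_cast
    ring
  rw [Fintype.sum_option, Fintype.sum_option]
  have h0 : expWeight k ε none = 0 := rfl
  have ht : expWeight k ε (some none) = 1 - ((2 * k : ℕ) : ENNReal) * p := rfl
  have hi : (∑ x : Fin k × Bool, expWeight k ε (some (some x)))
      = ((2 * k : ℕ) : ENNReal) * p := hconst
  rw [h0, ht, hi, zero_add, tsub_add_cancel_of_le hle]

/-- The Markov chain with `2k + 2` states exhibiting exponentially many minimal `ε`-cores:
`δ(s₀) = Σᵢ p·(δ_{aᵢ} + δ_{bᵢ}) + (1 − 2kp)·δ_t` with `p = ε/(k+1)`, and the states `t`,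
`aᵢ`, `bᵢ` are all absorbing. -/
noncomputable def expChain (k : ℕ) (ε : ℝ) (hε1 : 0 < ε) (hε2 : ε ≤ 1 / 3) :
    MC (ExpState k) where
  init := none
  trans := fun s =>
    match s with
    | none => PMF.ofFintype (expWeight k ε) (expWeight_sum k ε hε1 hε2)
    | some x => PMF.pure (some x)

/-! ### Auxiliary lemmas -/

lemma two_mul_le_two_pow : ∀ m : ℕ, 1 ≤ m → 2*m ≤ 2^m := by
  intro m hm
  induction m with
  | zero => omega
  | succ n ih =>
    rcases Nat.eq_or_lt_of_le hm with h | h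
    · have : n = 0 := by omega
      subst this
      norm_num
    · have h1 : 1 ≤ n := by omega
      have h2 : 2 ≤ 2^n := by
        calc 2 = 2^1 := rfl
        _ ≤ 2^n := Nat.pow_le_pow_right (by norm_num) h1
      have := ih h1
      have : 2*(n+1) ≤ 2^n + 2^n := by omega
      calc 2*(n+1) ≤ 2^n + 2^n := this
        _ = 2^(n+1) := by ring



section Aux

open Classical in
lemma mcCylProb_cons [DecidableEq S] (M : MC S) (s t : S) (rest : List S) :
    mcCylProb M s (t :: rest)
      = (if t = s then 1 else 0) * ∑' s' : S, (M.trans s) s' * mcCylProb M s' rest := rfl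

lemma mcCylProb_nil [DecidableEq S] (M : MC S) (s : S) : mcCylProb M s [] = 1 := rfl

lemma mcCylProb_single [DecidableEq S] (M : MC S) (s t : S) :
    mcCylProb M s [t] = if t = s then 1 else 0 := by
  rw [mcCylProb_cons]
  simp only [mcCylProb_nil, mul_one, (M.trans s).tsum_coe, mul_one]

lemma tsum_pure_mul [DecidableEq S] (a : S) (f : S → ENNReal) :
    (∑' s' : S, (PMF.pure a) s' * f s') = f a := by
  rw [tsum_eq_single a]
  · simp [PMF.pure_apply]
  · intro b hb
    simp [PMF.pure_apply, hb]

/-- Membership in a cylinder of length 2. -/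
lemma mem_MCCyl_pair {a b : S} {ω : MCTraj S} :
    ω ∈ MCCyl [a, b] ↔ ω 0 = a ∧ ω 1 = b := by
  constructor
  · intro h
    exact ⟨h ⟨0, by norm_num⟩, h ⟨1, by norm_num⟩⟩
  · rintro ⟨h0, h1⟩ ⟨i, hi⟩
    match i with
    | 0 => exact h0
    | 1 => exact h1

lemma mem_MCCyl_single {a : S} {ω : MCTraj S} :
    ω ∈ MCCyl [a] ↔ ω 0 = a := by
  constructor
  · intro h; exact h ⟨0, by norm_num⟩
  · rintro h0 ⟨i, hi⟩
    match i with
    | 0 => exact h0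

lemma mem_MCCyl_rep {a b : S} {n : ℕ} {ω : MCTraj S} :
    ω ∈ MCCyl (a :: List.replicate (n+1) b) ↔ ω 0 = a ∧ ∀ i ≤ n, ω (i+1) = b := by
  have hlen : (a :: List.replicate (n+1) b).length = n + 2 := by simp
  constructor
  · intro h
    refine ⟨h ⟨0, by omega⟩, fun i hi => ?_⟩
    have := h ⟨i+1, by omega⟩
    simpa using this
  · rintro ⟨h0, hs⟩ ⟨i, hi⟩
    match i with
    | 0 => exact h0
    | (j+1) =>
      have hj : j ≤ n := by rw [hlen] at hi; omega
      simpa using hs j hj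

lemma measurableSet_MCCyl (pre : List S) : MeasurableSet (MCCyl pre) := by
  have : MCCyl pre = ⋂ i : Fin pre.length, (fun ω : MCTraj S => ω i) ⁻¹' {pre.get i} := by
    ext ω; simp [MCCyl, Set.mem_iInter]
  rw [this]
  refine MeasurableSet.iInter fun i => ?_
  exact (@measurable_pi_apply ℕ (fun _ => S) (fun _ => ⊤) (i : ℕ)) MeasurableSpace.measurableSet_top

lemma measurableSet_MCReach (R : Set S) : MeasurableSet (MCReach R) := by
  have : MCReach R = ⋃ i : ℕ, (fun ω : MCTraj S => ω i) ⁻¹' R := by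
    ext ω; simp [MCReach]
  rw [this]
  refine MeasurableSet.iUnion fun i => ?_
  exact (@measurable_pi_apply ℕ (fun _ => S) (fun _ => ⊤) i) MeasurableSpace.measurableSet_top

/-- The set of paths that start at `a` and stay at `b` forever after. -/
def staySet (a b : S) : Set (MCTraj S) := ⋂ n : ℕ, MCCyl (a :: List.replicate (n+1) b)

lemma mem_staySet {a b : S} {ω : MCTraj S} :
    ω ∈ staySet a b ↔ ω 0 = a ∧ ∀ i, ω (i+1) = b := by
  simp only [staySet, Set.mem_iInter, mem_MCCyl_rep]
  constructor
  · intro h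
    exact ⟨(h 0).1, fun i => (h i).2 i le_rfl⟩
  · rintro ⟨h0, h⟩ n
    exact ⟨h0, fun i _ => h i⟩

lemma measurableSet_staySet (a b : S) : MeasurableSet (staySet a b) :=
  MeasurableSet.iInter fun _ => measurableSet_MCCyl _

end Aux

section Chain
open scoped Classical

/-- The leaf states contained in `C`. -/
noncomputable def LsetOf {k : ℕ} (C : Set (ExpState k)) : Finset (Fin k × Bool) :=
  @Finset.filter _ (fun x => some (some x) ∈ C)
    (fun _ => Classical.propDecidable _) Finset.univ

/-- The leaf states excluded from `C`. -/
noncomputable def BsetOf {k : ℕ} (C : Set (ExpState k)) : Finset (Fin k × Bool) :=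
  (LsetOf C)ᶜ

lemma mem_LsetOf {k : ℕ} {C : Set (ExpState k)} {x : Fin k × Bool} :
    x ∈ LsetOf C ↔ some (some x) ∈ C := by
  unfold LsetOf
  exact Iff.intro (fun h => (Finset.mem_filter.mp h).2)
    (fun h => Finset.mem_filter.mpr ⟨Finset.mem_univ _, h⟩)

lemma mem_BsetOf {k : ℕ} {C : Set (ExpState k)} {x : Fin k × Bool} :
    x ∈ BsetOf C ↔ some (some x) ∉ C := by
  unfold BsetOf
  rw [Finset.mem_compl, mem_LsetOf]

variable (k : ℕ) (ε : ℝ) (hε1 : 0 < ε) (hε2 : ε ≤ 1/3)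

lemma expChain_trans_none (s : ExpState k) :
    ((expChain k ε hε1 hε2).trans none) s = expWeight k ε s := by
  show (PMF.ofFintype (expWeight k ε) (expWeight_sum k ε hε1 hε2)) s = _
  rw [PMF.ofFintype_apply]

lemma expChain_trans_some (x : Option (Fin k × Bool)) :
    (expChain k ε hε1 hε2).trans (some x) = PMF.pure (some x) := rfl

lemma cyl_pair (s : ExpState k) :
    mcCylProb (expChain k ε hε1 hε2) none [none, s] = expWeight k ε s := by
  rw [mcCylProb_cons, if_pos rfl, one_mul, tsum_eq_single s]
  · rw [expChain_trans_none, mcCylProb_single, if_pos rfl, mul_one]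
  · intro b hb
    rw [mcCylProb_single, if_neg (fun h => hb h.symm), mul_zero]

lemma cyl_rep (x : Option (Fin k × Bool)) (n : ℕ) :
    mcCylProb (expChain k ε hε1 hε2) (some x) (List.replicate n (some x)) = 1 := by
  induction n with
  | zero => rfl
  | succ n ih =>
    rw [List.replicate_succ, mcCylProb_cons, if_pos rfl, one_mul,
      expChain_trans_some, tsum_pure_mul, ih]

lemma cyl_stay (x : Option (Fin k × Bool)) (n : ℕ) :
    mcCylProb (expChain k ε hε1 hε2) none (none :: List.replicate (n+1) (some x))
      = expWeight k ε (some x) := by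
  rw [mcCylProb_cons, if_pos rfl, one_mul, List.replicate_succ,
    tsum_eq_single (some x : ExpState k)]
  · rw [expChain_trans_none, mcCylProb_cons, if_pos rfl, one_mul,
      expChain_trans_some, tsum_pure_mul, cyl_rep, mul_one]
  · intro b hb
    rw [mcCylProb_cons, if_neg (fun h => hb h.symm), zero_mul, mul_zero]


include hε1 in
lemma mul_q_lt_iff (j : ℕ) :
    (j : ENNReal) * ENNReal.ofReal (ε/(k+1)) < ENNReal.ofReal ε ↔ j ≤ k := by
  have hk1 : (0:ℝ) < (k:ℝ)+1 := by positivity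
  have hd : (0:ℝ) < ε/((k:ℝ)+1) := by positivity
  have he : ((k:ℝ)+1) * (ε/((k:ℝ)+1)) = ε := by field_simp
  rw [show ((j:ENNReal)) = ENNReal.ofReal (j:ℝ) by simp [ENNReal.ofReal_natCast],
    ← ENNReal.ofReal_mul (by positivity), ENNReal.ofReal_lt_ofReal_iff hε1]
  have key : (j:ℝ) * (ε/((k:ℝ)+1)) < ε ↔ (j:ℝ) < (k:ℝ)+1 := by
    constructor
    · intro h
      by_contra hc
      push_neg at hc
      nlinarith
    · intro h
      nlinarith
  rw [key, show ((k:ℝ)+1) = ((k+1:ℕ):ℝ) by push_cast; ring, Nat.cast_lt, Nat.lt_succ_iff]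

include hε1 hε2 in
lemma wt_ge : ENNReal.ofReal ε ≤ expWeight k ε (some none) := by
  have hk1 : (0:ℝ) < (k:ℝ)+1 := by positivity
  have h1 : ((2*k:ℕ):ENNReal) * ENNReal.ofReal (ε/(k+1))
      = ENNReal.ofReal ((2*(k:ℝ)) * (ε/((k:ℝ)+1))) := by
    rw [← ENNReal.ofReal_natCast, ← ENNReal.ofReal_mul (by positivity)]
    push_cast
    ring_nf
  have h2 : (2*(k:ℝ)) * (ε/((k:ℝ)+1)) ≤ 2/3 := by
    rw [mul_div_assoc', div_le_iff₀ hk1]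
    nlinarith [Nat.cast_nonneg (α := ℝ) k]
  show ENNReal.ofReal ε ≤ 1 - ((2*k:ℕ):ENNReal) * ENNReal.ofReal (ε/(k+1))
  calc ENNReal.ofReal ε ≤ ENNReal.ofReal (1/3) := ENNReal.ofReal_le_ofReal hε2
    _ = ENNReal.ofReal (1 - 2/3) := by norm_num
    _ = ENNReal.ofReal 1 - ENNReal.ofReal (2/3) := ENNReal.ofReal_sub 1 (by norm_num)
    _ ≤ 1 - ((2*k:ℕ):ENNReal) * ENNReal.ofReal (ε/(k+1)) := by
        rw [ENNReal.ofReal_one]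
        refine tsub_le_tsub_left ?_ 1
        rw [h1]
        exact ENNReal.ofReal_le_ofReal h2

lemma card_split (C : Set (ExpState k)) :
    (LsetOf C).card + (BsetOf C).card = 2*k := by
  classical
  rw [show BsetOf C = (LsetOf C)ᶜ from rfl, Finset.card_add_card_compl]
  simp [Fintype.card_prod, mul_comm]

lemma sum_excluded (C : Set (ExpState k)) (h0 : none ∈ C) (ht : some none ∈ C) :
    ∑ s ∈ Finset.univ.filter (fun s => s ∉ C), expWeight k ε s
      = ((BsetOf C).card : ENNReal) * ENNReal.ofReal (ε/(k+1)) := by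
  have hFB : Finset.univ.filter (fun s : ExpState k => s ∉ C)
      = (BsetOf C).image (fun x => some (some x)) := by
    ext s
    rcases s with _ | (_ | x)
    · simp [h0]
    · simp [ht]
    · simp [mem_BsetOf]
  rw [hFB, Finset.sum_image (by intro a _ b _ h; simpa using h)]
  have : ∀ x : Fin k × Bool, expWeight k ε (some (some x)) = ENNReal.ofReal (ε/(k+1)) :=
    fun x => rfl
  simp only [this, Finset.sum_const, nsmul_eq_mul]

lemma subset_decomp (C : Set (ExpState k)) (h0 : none ∈ C) (ht : some none ∈ C) :
    C = ({none, some none} : Set (ExpState k)) ∪ (fun x => some (some x)) ''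
        ↑(LsetOf C) := by
  ext s
  rcases s with _ | (_ | x)
  · simp [h0]
  · simp [ht]
  · simp [mem_LsetOf]

lemma lset_union (L : Finset (Fin k × Bool)) :
    LsetOf (({none, some none} : Set (ExpState k))
          ∪ (fun x => some (some x)) '' ↑L) = L := by
  ext x
  rw [mem_LsetOf]
  simp

variable (P : ExpState k → Measure (MCTraj (ExpState k)))
variable (hP : IsMCPathMeasure (expChain k ε hε1 hε2) P)
include hP

lemma measure_staySet (x : Option (Fin k × Bool)) :
    P none (staySet (none : ExpState k) (some x)) = expWeight k ε (some x) := by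
  have key : P none (⋂ n : ℕ, MCCyl ((none : ExpState k) :: List.replicate (n+1) (some x)))
      = ⨅ n : ℕ, P none (MCCyl ((none : ExpState k) :: List.replicate (n+1) (some x))) := by
    refine Directed.measure_iInter (fun n => (measurableSet_MCCyl _).nullMeasurableSet)
      ?_ ⟨0, ?_⟩
    · refine Antitone.directed_ge (antitone_nat_of_succ_le fun n => ?_)
      intro ω hω
      rw [mem_MCCyl_rep] at hω ⊢
      exact ⟨hω.1, fun i hi => hω.2 i (Nat.le_succ_of_le hi)⟩
    · haveI := hP.1 none
      exact measure_ne_top _ _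
  rw [staySet, key]
  have : ∀ n : ℕ, P none (MCCyl ((none : ExpState k) :: List.replicate (n+1) (some x)))
      = expWeight k ε (some x) := fun n => by rw [hP.2, cyl_stay]
  simp only [this, iInf_const]


lemma reach_measure (C : Set (ExpState k)) (hC : none ∈ C) :
    P none (MCReach Cᶜ)
      = ∑ s ∈ Finset.univ.filter (fun s => s ∉ C), expWeight k ε s := by
  classical
  haveI := hP.1 none
  set F := Finset.univ.filter (fun s : ExpState k => s ∉ C) with hF
  refine le_antisymm ?_ ?_
  · -- upper bound via the staying paths
    set T := Finset.univ.filter (fun s : ExpState k => s ∈ C ∧ s ≠ none) with hT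
    set Stay := ⋃ s ∈ T, staySet (none : ExpState k) s with hStay
    have hmeasStay : MeasurableSet Stay :=
      MeasurableSet.biUnion T.countable_toSet fun s _ => measurableSet_staySet _ _
    have hdisj : (T : Set (ExpState k)).PairwiseDisjoint
        (fun s => staySet (none : ExpState k) s) := by
      intro a _ b _ hab
      refine Set.disjoint_left.2 fun ω ha hb => hab ?_
      rw [mem_staySet] at ha hb
      rw [← ha.2 0, hb.2 0]
    have hStayVal : P none Stay = ∑ s ∈ T, expWeight k ε s := by
      rw [hStay, measure_biUnion_finset hdisj (fun s _ => measurableSet_staySet _ _)]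
      refine Finset.sum_congr rfl fun s hs => ?_
      have hsne : s ≠ none := ((Finset.mem_filter.1 hs).2).2
      obtain ⟨x, rfl⟩ : ∃ x, s = some x := Option.ne_none_iff_exists'.1 hsne
      exact measure_staySet k ε hε1 hε2 P hP x
    have hsub : MCReach Cᶜ ⊆ Stayᶜ := by
      intro ω hω
      rw [Set.mem_compl_iff, hStay, Set.mem_iUnion]
      rintro ⟨s, hsT⟩
      rw [Set.mem_iUnion] at hsT
      obtain ⟨hsT, hωs⟩ := hsT
      rw [mem_staySet] at hωs
      obtain ⟨hsC, -⟩ := (Finset.mem_filter.1 hsT).2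
      obtain ⟨i, hi⟩ := hω
      match i with
      | 0 => exact hi (hωs.1 ▸ hC)
      | (j+1) => exact hi (hωs.2 j ▸ hsC)
    have hdisjFT : Disjoint F T := by
      rw [Finset.disjoint_left]
      intro s hsF hsT
      exact (Finset.mem_filter.1 hsF).2 ((Finset.mem_filter.1 hsT).2).1
    have hsum : ∑ s ∈ F, expWeight k ε s + ∑ s ∈ T, expWeight k ε s = 1 := by
      rw [← Finset.sum_union hdisjFT]
      rw [← expWeight_sum k ε hε1 hε2]
      apply Finset.sum_subset (Finset.subset_univ _)
      intro s _ hs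
      rw [Finset.mem_union, Finset.mem_filter, Finset.mem_filter] at hs
      push_neg at hs
      obtain ⟨h1, h2⟩ := hs
      have hsC : s ∈ C := h1 (Finset.mem_univ s)
      have : s = none := h2 (Finset.mem_univ s) hsC
      rw [this]; rfl
    have hTtop : ∑ s ∈ T, expWeight k ε s ≠ ⊤ := by
      intro h
      rw [h, add_top] at hsum
      exact ENNReal.top_ne_one hsum
    calc P none (MCReach Cᶜ) ≤ P none Stayᶜ := measure_mono hsub
      _ = 1 - P none Stay := prob_compl_eq_one_sub hmeasStay
      _ = ∑ s ∈ F, expWeight k ε s := by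
          rw [hStayVal]
          exact (ENNReal.eq_sub_of_add_eq hTtop hsum).symm
  · -- lower bound via the length-2 cylinders
    have hdisj2 : (F : Set (ExpState k)).PairwiseDisjoint
        (fun s => MCCyl [(none : ExpState k), s]) := by
      intro a _ b _ hab
      refine Set.disjoint_left.2 fun ω ha hb => hab ?_
      rw [mem_MCCyl_pair] at ha hb
      rw [← ha.2, hb.2]
    have hval : P none (⋃ s ∈ F, MCCyl [(none : ExpState k), s])
        = ∑ s ∈ F, expWeight k ε s := by
      rw [measure_biUnion_finset hdisj2 (fun s _ => measurableSet_MCCyl _)]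
      exact Finset.sum_congr rfl fun s _ => by rw [hP.2, cyl_pair]
    rw [← hval]
    refine measure_mono fun ω hω => ?_
    rw [Set.mem_iUnion] at hω
    obtain ⟨s, hω⟩ := hω
    rw [Set.mem_iUnion] at hω
    obtain ⟨hsF, hω⟩ := hω
    rw [mem_MCCyl_pair] at hω
    exact ⟨1, hω.2 ▸ (Finset.mem_filter.1 hsF).2⟩

lemma not_core_of_none_notin (C : Set (ExpState k)) (hC : none ∉ C) :
    ¬ IsMCCore (expChain k ε hε1 hε2) P ε C := by
  intro h
  have hcyl := hP.2 none [none]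
  rw [mcCylProb_single, if_pos rfl] at hcyl
  have h1 : (1 : ENNReal) ≤ P none (MCReach Cᶜ) := by
    rw [← hcyl]
    refine measure_mono fun ω hω => ?_
    rw [mem_MCCyl_single] at hω
    exact ⟨0, hω ▸ hC⟩
  have h2 : ENNReal.ofReal ε ≤ 1 := ENNReal.ofReal_le_one.2 (by linarith)
  have : P (expChain k ε hε1 hε2).init (MCReach Cᶜ) < ENNReal.ofReal ε := h
  exact absurd this (not_lt.2 (le_trans h2 h1))


lemma core_iff (C : Set (ExpState k)) :
    IsMCCore (expChain k ε hε1 hε2) P ε C ↔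
      none ∈ C ∧ some none ∈ C ∧ k ≤ (LsetOf C).card := by
  constructor
  · intro h
    have h0 : none ∈ C := by
      by_contra hn
      exact not_core_of_none_notin k ε hε1 hε2 P hP C hn h
    have h' : ∑ s ∈ Finset.univ.filter (fun s => s ∉ C), expWeight k ε s
        < ENNReal.ofReal ε := by
      rw [← reach_measure k ε hε1 hε2 P hP C h0]
      exact h
    have ht : some none ∈ C := by
      by_contra hn
      have hmem : (some none : ExpState k) ∈ Finset.univ.filter
          (fun s : ExpState k => s ∉ C) := Finset.mem_filter.2 ⟨Finset.mem_univ _, hn⟩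
      have hle : expWeight k ε (some none)
          ≤ ∑ s ∈ Finset.univ.filter (fun s => s ∉ C), expWeight k ε s :=
        Finset.single_le_sum (fun _ _ => zero_le) hmem
      exact absurd h' (not_lt.2 (le_trans (wt_ge k ε hε1 hε2) hle))
    rw [sum_excluded k ε C h0 ht, mul_q_lt_iff k ε hε1] at h'
    have := card_split k C
    exact ⟨h0, ht, by omega⟩
  · rintro ⟨h0, ht, hL⟩
    show P (expChain k ε hε1 hε2).init (MCReach Cᶜ) < ENNReal.ofReal ε
    have hinit : (expChain k ε hε1 hε2).init = none := rfl
    rw [hinit, reach_measure k ε hε1 hε2 P hP C h0, sum_excluded k ε C h0 ht,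
      mul_q_lt_iff k ε hε1]
    have := card_split k C
    omega

lemma min_core_iff (C : Set (ExpState k)) :
    IsMinimalMCCore (expChain k ε hε1 hε2) P ε C ↔
      ∃ L : Finset (Fin k × Bool), L.card = k ∧
        C = ({none, some none} : Set (ExpState k))
          ∪ (fun x => some (some x)) '' (L : Set (Fin k × Bool)) := by
  constructor
  · rintro ⟨hcore, hmin⟩
    obtain ⟨h0, ht, hL⟩ := (core_iff k ε hε1 hε2 P hP C).1 hcore
    have hcardle : (LsetOf C).card ≤ k := by
      by_contra hgt
      push_neg at hgt
      obtain ⟨x, hx⟩ : ∃ x, x ∈ LsetOf C := Finset.card_pos.1 (by omega)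
      have hxC : some (some x) ∈ C := mem_LsetOf.1 hx
      refine hmin (C \ {some (some x)}) ⟨Set.diff_subset, fun hCC' => (hCC' hxC).2 rfl⟩ ?_
      refine (core_iff k ε hε1 hε2 P hP _).2 ⟨⟨h0, by simp⟩, ⟨ht, by simp⟩, ?_⟩
      have hL' : LsetOf (C \ {some (some x)}) = (LsetOf C).erase x := by
        ext y
        rw [mem_LsetOf, Finset.mem_erase, mem_LsetOf]
        simp only [Set.mem_diff, Set.mem_singleton_iff]
        constructor
        · rintro ⟨hyC, hyx⟩
          exact ⟨fun h => hyx (by rw [h]), hyC⟩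
        · rintro ⟨hyx, hyC⟩
          exact ⟨hyC, fun h => hyx (by injection (Option.some.inj h))⟩
      rw [hL', Finset.card_erase_of_mem hx]
      omega
    exact ⟨LsetOf C, le_antisymm hcardle hL, subset_decomp k C h0 ht⟩
  · rintro ⟨L, hLcard, rfl⟩
    have hLset : LsetOf (({none, some none} : Set (ExpState k))
        ∪ (fun x => some (some x)) '' (L : Set (Fin k × Bool))) = L := lset_union k L
    have h0 : (none : ExpState k) ∈ ({none, some none} : Set (ExpState k))
        ∪ (fun x => some (some x)) '' (L : Set (Fin k × Bool)) := by simp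
    have ht : (some none : ExpState k) ∈ ({none, some none} : Set (ExpState k))
        ∪ (fun x => some (some x)) '' (L : Set (Fin k × Bool)) := by simp
    constructor
    · exact (core_iff k ε hε1 hε2 P hP _).2 ⟨h0, ht, by rw [hLset, hLcard]⟩
    · intro C' hC' hcore'
      obtain ⟨h0', ht', hL'⟩ := (core_iff k ε hε1 hε2 P hP C').1 hcore'
      have hsub : LsetOf C' ⊆ L := by
        intro x hx
        have hxC : some (some x) ∈ ({none, some none} : Set (ExpState k))
            ∪ (fun x => some (some x)) '' (L : Set (Fin k × Bool)) :=
          hC'.1 (mem_LsetOf.1 hx)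
        rw [← hLset]
        exact mem_LsetOf.2 hxC
      have hLL : LsetOf C' = L := Finset.eq_of_subset_of_card_le hsub (by omega)
      have hCsub : ({none, some none} : Set (ExpState k))
          ∪ (fun x => some (some x)) '' (L : Set (Fin k × Bool)) ⊆ C' := by
        intro s hs
        rcases hs with hs | hs
        · rcases hs with hs | hs
          · rw [hs]; exact h0'
          · rw [hs]; exact ht'
        · obtain ⟨x, hxL, rfl⟩ := hs
          have hx' : x ∈ LsetOf C' := by rw [hLL]; exact hxL
          exact mem_LsetOf.1 hx'
      exact hC'.2 hCsub

end Chain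
/-- For every `0 < ε ≤ 1/3` and `k ≥ 1`, the chain `expChain k ε` has
`2k + 2` states; a set `C` is a minimal `ε`-core exactly when `C = {s₀, t} ∪ L` for some
`k`-element set `L` of the states `aᵢ, bᵢ`; hence there are `binom(2k, k) ≥ 2^k` pairwise
distinct minimal `ε`-cores. -/
theorem exponentially_many_minimal_cores (k : ℕ) (hk : 1 ≤ k)
    (ε : ℝ) (hε1 : 0 < ε) (hε2 : ε ≤ 1 / 3)
    (P : ExpState k → Measure (MCTraj (ExpState k)))
    (hP : IsMCPathMeasure (expChain k ε hε1 hε2) P) :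
    Fintype.card (ExpState k) = 2 * k + 2 ∧
    (∀ C : Set (ExpState k),
      IsMinimalMCCore (expChain k ε hε1 hε2) P ε C ↔
        ∃ L : Finset (Fin k × Bool), L.card = k ∧
          C = {none, some none} ∪ (fun x => some (some x)) '' (L : Set (Fin k × Bool))) ∧
    {C : Set (ExpState k) | IsMinimalMCCore (expChain k ε hε1 hε2) P ε C}.ncard
      = (2 * k).choose k ∧
    2 ^ k ≤ (2 * k).choose k := by
  classical
  have hcard : Fintype.card (ExpState k) = 2 * k + 2 := by
    show Fintype.card (Option (Option (Fin k × Bool))) = 2 * k + 2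
    rw [Fintype.card_option, Fintype.card_option, Fintype.card_prod,
      Fintype.card_fin, Fintype.card_bool]
    omega
  have hiff := min_core_iff k ε hε1 hε2 P hP
  have hchoose : 2 ^ k ≤ (2 * k).choose k := by
    have h1 := Nat.four_pow_le_two_mul_self_mul_centralBinom k (by omega)
    have h2 := two_mul_le_two_pow k hk
    have hcb : Nat.centralBinom k = (2*k).choose k := rfl
    rw [hcb] at h1
    have h4 : (4:ℕ)^k = 2^k * 2^k := by
      rw [← mul_pow]
      norm_num
    have key : 2^k * 2^k ≤ 2^k * (2*k).choose k := by
      calc 2^k * 2^k = 4^k := h4.symm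
        _ ≤ 2*k * (2*k).choose k := h1
        _ ≤ 2^k * (2*k).choose k := Nat.mul_le_mul_right _ h2
    exact Nat.le_of_mul_le_mul_left key (Nat.pow_pos (n := k) (by norm_num))
  refine ⟨hcard, hiff, ?_, hchoose⟩
  have hset : {C : Set (ExpState k) | IsMinimalMCCore (expChain k ε hε1 hε2) P ε C}
      = (fun L : Finset (Fin k × Bool) =>
          ({none, some none} : Set (ExpState k)) ∪ (fun x => some (some x)) '' ↑L) ''
        {L : Finset (Fin k × Bool) | L.card = k} := by
    ext C
    rw [Set.mem_setOf_eq, hiff C]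
    constructor
    · rintro ⟨L, h1, h2⟩
      exact ⟨L, h1, h2.symm⟩
    · rintro ⟨L, h1, h2⟩
      exact ⟨L, h1, h2.symm⟩
  have hinj : Set.InjOn (fun L : Finset (Fin k × Bool) =>
      ({none, some none} : Set (ExpState k)) ∪ (fun x => some (some x)) '' ↑L)
      {L : Finset (Fin k × Bool) | L.card = k} := by
    intro L1 _ L2 _ heq
    have h1 := lset_union k L1
    have h2 := lset_union k L2
    calc L1 = LsetOf (({none, some none} : Set (ExpState k))
          ∪ (fun x => some (some x)) '' ↑L1) := h1.symm
      _ = LsetOf (({none, some none} : Set (ExpState k))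
          ∪ (fun x => some (some x)) '' ↑L2) := by rw [show (({none, some none} : Set (ExpState k)) ∪ (fun x => some (some x)) '' ↑L1) = (({none, some none} : Set (ExpState k)) ∪ (fun x => some (some x)) '' ↑L2) from heq]
      _ = L2 := h2
  rw [hset, Set.ncard_image_of_injOn hinj]
  have hcardset : {L : Finset (Fin k × Bool) | L.card = k}
      = ↑(Finset.powersetCard k (Finset.univ : Finset (Fin k × Bool))) := by
    ext L
    simp [Finset.mem_powersetCard_univ]
  rw [hcardset, Set.ncard_coe_finset, Finset.card_powersetCard, Finset.card_univ]
  rw [Fintype.card_prod, Fintype.card_fin, Fintype.card_bool, mul_comm]
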